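/- Let A = [[0, 1], [1/2, 1/2]] (a row-stochastic 2×2 matrix) with dominant eigenvector u = (1,1). Then for every C > 0 there exists β_C < 1 such that for all x ∈ ℝ_{>0}² with d_H(x, u) ≤ C, one has d_H(A x, u) ≤ β_C · d_H(x, u), i.e. A is contractive with respect to u on Hilbert-distance balls around u, even though A is not entrywise strictly positive. -/

import Mathlib

open scoped BigOperators

noncomputable def vecNorm {n : ℕ} (v : Fin n → ℝ) : ℝ := Real.sqrt (∑ i, v i ^ 2)

noncomputable def frobNorm {N d : ℕ} (X : Matrix (Fin N) (Fin d) ℝ) : ℝ :=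
  Real.sqrt (∑ i, ∑ j, X i j ^ 2)

noncomputable def specNorm {N d : ℕ} (X : Matrix (Fin N) (Fin d) ℝ) : ℝ :=
  sSup {c : ℝ | ∃ v : Fin d → ℝ, vecNorm v ≤ 1 ∧ c = vecNorm (X.mulVec v)}

noncomputable def numRank {N d : ℕ} (X : Matrix (Fin N) (Fin d) ℝ) : ℝ :=
  frobNorm X ^ 2 / specNorm X ^ 2

def frobInner {N d : ℕ} (A B : Matrix (Fin N) (Fin d) ℝ) : ℝ := ∑ i, ∑ j, A i j * B i j

/-- Hilbert projective distance on the open positive cone. -/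
noncomputable def dH {n : ℕ} (x y : Fin n → ℝ) : ℝ :=
  Real.log ((⨆ i, x i / y i) / (⨅ i, x i / y i))

/-- Apply a map `σ : ℝ^N → ℝ^N` to each column of a matrix. -/
def colApply {N d : ℕ} (σ : (Fin N → ℝ) → (Fin N → ℝ)) (M : Matrix (Fin N) (Fin d) ℝ) :
    Matrix (Fin N) (Fin d) ℝ := Matrix.of fun i j => σ (fun k => M k j) i

/-- The row-stochastic matrix `A = [[0,1],[1/2,1/2]]` is not entrywise positive, yet it is
contractive in the Hilbert distance towards its dominant eigenvector `u = (1,1)` on every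
Hilbert-distance ball around `u`. -/


lemma holder2 {a b c d : ℝ} (ha : 0 < a) (hb : 0 < b) (hc : 0 < c) (hd : 0 < d)
    {l : ℝ} (hl0 : 0 ≤ l) (hl1 : l ≤ 1) :
    a ^ (1 - l) * b ^ l + c ^ (1 - l) * d ^ l ≤ (a + c) ^ (1 - l) * (b + d) ^ l := by
  have hS : 0 < a + c := by linarith
  have hT : 0 < b + d := by linarith
  have hl' : 0 ≤ 1 - l := by linarith
  have h1 : a ^ (1 - l) * b ^ l = ((a / (a + c)) ^ (1 - l) * (b / (b + d)) ^ l) *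
      ((a + c) ^ (1 - l) * (b + d) ^ l) := by
    rw [Real.div_rpow ha.le hS.le, Real.div_rpow hb.le hT.le]
    field_simp
  have h2 : c ^ (1 - l) * d ^ l = ((c / (a + c)) ^ (1 - l) * (d / (b + d)) ^ l) *
      ((a + c) ^ (1 - l) * (b + d) ^ l) := by
    rw [Real.div_rpow hc.le hS.le, Real.div_rpow hd.le hT.le]
    field_simp
  have g1 := Real.geom_mean_le_arith_mean2_weighted hl' hl0
    (div_nonneg ha.le hS.le) (div_nonneg hb.le hT.le) (by ring)
  have g2 := Real.geom_mean_le_arith_mean2_weighted hl' hl0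
    (div_nonneg hc.le hS.le) (div_nonneg hd.le hT.le) (by ring)
  have hpos : 0 < (a + c) ^ (1 - l) * (b + d) ^ l :=
    mul_pos (Real.rpow_pos_of_pos hS _) (Real.rpow_pos_of_pos hT _)
  have hsum : (1 - l) * (a / (a + c)) + l * (b / (b + d)) +
      ((1 - l) * (c / (a + c)) + l * (d / (b + d))) = 1 := by
    field_simp
    ring
  calc a ^ (1 - l) * b ^ l + c ^ (1 - l) * d ^ l
      ≤ ((1 - l) * (a / (a + c)) + l * (b / (b + d)) +
         ((1 - l) * (c / (a + c)) + l * (d / (b + d)))) *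
        ((a + c) ^ (1 - l) * (b + d) ^ l) := by
        rw [h1, h2, add_mul]
        gcongr
    _ = (a + c) ^ (1 - l) * (b + d) ^ l := by rw [hsum, one_mul]

lemma keyA {C t : ℝ} (hC : 0 < C) (ht1 : 1 ≤ t) (ht2 : t ≤ Real.exp C) :
    Real.log ((1 + t) / 2) ≤ (Real.log ((1 + Real.exp C) / 2) / C) * Real.log t := by
  have ht0 : 0 < t := lt_of_lt_of_le one_pos ht1
  have hlt : 0 ≤ Real.log t := Real.log_nonneg ht1
  have hltC : Real.log t ≤ C := by
    have := Real.log_le_log ht0 ht2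
    rwa [Real.log_exp] at this
  set l := Real.log t / C with hl
  have hl0 : 0 ≤ l := div_nonneg hlt hC.le
  have hl1 : l ≤ 1 := (div_le_one hC).2 hltC
  have hh := holder2 (a := 1) (b := 1) (c := 1) (d := Real.exp C)
    one_pos one_pos one_pos (Real.exp_pos C) hl0 hl1
  have hd : (Real.exp C) ^ l = t := by
    rw [Real.rpow_def_of_pos (Real.exp_pos C), Real.log_exp, hl]
    rw [mul_div_cancel₀ _ hC.ne']
    exact Real.exp_log ht0
  rw [Real.one_rpow, Real.one_rpow, hd] at hh
  -- hh : 1 * 1 + 1 * t ≤ (1+1)^(1-l) * (1 + exp C)^l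
  have hEpos : (0:ℝ) < 1 + Real.exp C := by positivity
  have h2l : ((1:ℝ)+1) ^ (1-l) = 2 / 2 ^ l := by
    norm_num
    rw [Real.rpow_sub two_pos, Real.rpow_one]
  have hkey : (1 + t) / 2 ≤ ((1 + Real.exp C) / 2) ^ l := by
    rw [Real.div_rpow hEpos.le (by norm_num)]
    rw [h2l] at hh
    rw [div_le_div_iff₀ two_pos (Real.rpow_pos_of_pos two_pos l)]
    calc (1 + t) * 2 ^ l ≤ (2 / 2 ^ l * (1 + Real.exp C) ^ l) * 2 ^ l := by
          nlinarith [Real.rpow_pos_of_pos two_pos l]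
      _ = (1 + Real.exp C) ^ l * 2 := by
          field_simp
  calc Real.log ((1 + t) / 2) ≤ Real.log (((1 + Real.exp C) / 2) ^ l) :=
        Real.log_le_log (by positivity) hkey
    _ = l * Real.log ((1 + Real.exp C) / 2) := Real.log_rpow (by positivity) l
    _ = Real.log ((1 + Real.exp C) / 2) / C * Real.log t := by rw [hl]; ring

lemma keyB {C t : ℝ} (hC : 0 < C) (ht0 : 0 < t) (ht1 : t ≤ 1) (ht2 : Real.exp (-C) ≤ t) :
    Real.log (2 / (1 + t)) ≤ (Real.log ((1 + Real.exp C) / 2) / C) * Real.log t⁻¹ := by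
  have hlt : Real.log t ≤ 0 := Real.log_nonpos ht0.le ht1
  have hltC : -C ≤ Real.log t := by
    have := Real.log_le_log (Real.exp_pos _) ht2
    rwa [Real.log_exp] at this
  have hden : 0 < C - Real.log t := by linarith
  obtain ⟨m, hm⟩ : ∃ m : ℝ, m = C / (C - Real.log t) := ⟨_, rfl⟩
  have hm0 : 0 < m := hm ▸ div_pos hC hden
  have hm1 : m ≤ 1 := hm ▸ (div_le_one hden).2 (by linarith)
  have hl0 : 0 ≤ 1 - m := by linarith
  have hl1 : 1 - m ≤ 1 := by linarith
  have hh := holder2 (a := 1) (b := 1) (c := t) (d := Real.exp C)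
    one_pos one_pos ht0 (Real.exp_pos C) hl0 hl1
  have hmix : t ^ (1 - (1 - m)) * (Real.exp C) ^ (1 - m) = 1 := by
    have h1 : (1:ℝ) - (1 - m) = m := by ring
    rw [h1, ← Real.exp_log ht0, ← Real.exp_mul, ← Real.exp_mul, ← Real.exp_add]
    rw [show Real.log t * m + C * (1 - m) = 0 by
      have : m * (C - Real.log t) = C := by rw [hm]; exact div_mul_cancel₀ C hden.ne'
      linear_combination -this]
    exact Real.exp_zero
  rw [Real.one_rpow, Real.one_rpow, hmix] at hh
  -- hh : 1*1 + 1 ≤ (1+t)^(1-(1-m)) * (1+exp C)^(1-m)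
  have hEpos : (0:ℝ) < 1 + Real.exp C := by positivity
  have htpos : (0:ℝ) < 1 + t := by linarith
  have hmm : (1:ℝ) - (1 - m) = m := by ring
  rw [hmm] at hh
  have hlog : Real.log 2 ≤ m * Real.log (1 + t) + (1 - m) * Real.log (1 + Real.exp C) := by
    have := Real.log_le_log two_pos (by linarith : (2:ℝ) ≤ (1+t)^m * (1+Real.exp C)^(1-m))
    rwa [Real.log_mul (Real.rpow_pos_of_pos htpos m).ne' (Real.rpow_pos_of_pos hEpos (1-m)).ne',
      Real.log_rpow htpos, Real.log_rpow hEpos] at this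
  have hmc : m * (C - Real.log t) = C := by rw [hm]; exact div_mul_cancel₀ C hden.ne'
  have hratio : (1 - m) * C = m * (-Real.log t) := by linear_combination (-1 : ℝ) * hmc
  have hfinal : m * Real.log (2 / (1 + t)) ≤ (1 - m) * Real.log ((1 + Real.exp C) / 2) := by
    rw [Real.log_div two_ne_zero htpos.ne', Real.log_div hEpos.ne' two_ne_zero]
    nlinarith
  have hrw : Real.log ((1 + Real.exp C) / 2) / C * Real.log t⁻¹ =
      ((1 - m) / m) * Real.log ((1 + Real.exp C) / 2) := by
    rw [Real.log_inv, div_mul_eq_mul_div, div_mul_eq_mul_div,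
      div_eq_div_iff hC.ne' hm0.ne']
    linear_combination Real.log ((1 + Real.exp C) / 2) * hmc
  rw [hrw]
  rw [div_mul_eq_mul_div, le_div_iff₀ hm0]
  linarith [hfinal]

lemma isup2 (f : Fin 2 → ℝ) : (⨆ i, f i) = max (f 0) (f 1) := by
  apply le_antisymm
  · exact ciSup_le fun i => by fin_cases i <;> simp [le_max_left, le_max_right]
  · exact max_le (le_ciSup (Set.Finite.bddAbove (Set.finite_range f)) 0)
      (le_ciSup (Set.Finite.bddAbove (Set.finite_range f)) 1)

lemma iinf2 (f : Fin 2 → ℝ) : (⨅ i, f i) = min (f 0) (f 1) := by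
  apply le_antisymm
  · exact le_min (ciInf_le (Set.Finite.bddBelow (Set.finite_range f)) 0)
      (ciInf_le (Set.Finite.bddBelow (Set.finite_range f)) 1)
  · exact le_ciInf fun i => by fin_cases i <;> simp [min_le_left, min_le_right]

theorem stmt13 :
    (¬ ∀ i j : Fin 2, 0 < (!![0, 1; 1/2, 1/2] : Matrix (Fin 2) (Fin 2) ℝ) i j) ∧
    (∀ C : ℝ, 0 < C → ∃ β : ℝ, β < 1 ∧
      ∀ x : Fin 2 → ℝ, (∀ i, 0 < x i) → dH x (fun _ => 1) ≤ C →
        dH ((!![0, 1; 1/2, 1/2] : Matrix (Fin 2) (Fin 2) ℝ).mulVec x) (fun _ => 1) ≤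
          β * dH x (fun _ => 1)) := by
  simp only [dH]
  constructor
  · intro h
    have := h 0 0
    simp at this
  · intro C hC
    have hE1 : (1:ℝ) < Real.exp C := by
      have := Real.exp_lt_exp.2 hC
      rwa [Real.exp_zero] at this
    refine ⟨Real.log ((1 + Real.exp C) / 2) / C, ?_, ?_⟩
    · rw [div_lt_one hC]
      calc Real.log ((1 + Real.exp C) / 2) < Real.log (Real.exp C) :=
            Real.log_lt_log (by positivity) (by linarith)
        _ = C := Real.log_exp C
    · intro x hx hball
      have ha := hx 0
      have hb := hx 1
      have hAx : (!![0, 1; 1/2, 1/2] : Matrix (Fin 2) (Fin 2) ℝ).mulVec x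
          = ![x 1, (x 0 + x 1) / 2] := by
        funext i
        fin_cases i <;>
          simp [Matrix.mulVec, dotProduct, Fin.sum_univ_two] <;> ring
      have hdx : Real.log ((⨆ i, x i / 1) / (⨅ i, x i / 1))
          = Real.log (max (x 0) (x 1) / min (x 0) (x 1)) := by
        simp only [div_one]
        rw [isup2, iinf2]
      rw [hAx, hdx]
      rw [hdx] at hball
      have hdAx : Real.log ((⨆ i, (![x 1, (x 0 + x 1) / 2]) i / 1) /
            (⨅ i, (![x 1, (x 0 + x 1) / 2]) i / 1))
          = Real.log (max (x 1) ((x 0 + x 1) / 2) / min (x 1) ((x 0 + x 1) / 2)) := by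
        simp only [div_one]
        rw [isup2, iinf2]
        simp
      rw [hdAx]
      rcases le_total (x 0) (x 1) with hcase | hcase
      · rw [max_eq_right hcase, min_eq_left hcase] at hball ⊢
        have hball' : x 1 / x 0 ≤ Real.exp C :=
          (Real.log_le_iff_le_exp (div_pos hb ha)).1 hball
        have ht0 : 0 < x 0 / x 1 := div_pos ha hb
        have ht1 : x 0 / x 1 ≤ 1 := (div_le_one hb).2 hcase
        have ht2 : Real.exp (-C) ≤ x 0 / x 1 := by
          rw [Real.exp_neg, show x 0 / x 1 = (x 1 / x 0)⁻¹ by rw [inv_div]]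
          exact inv_anti₀ (div_pos hb ha) hball'
        have hkey := keyB hC ht0 ht1 ht2
        rw [max_eq_left (by linarith : (x 0 + x 1) / 2 ≤ x 1),
          min_eq_right (by linarith : (x 0 + x 1) / 2 ≤ x 1)]
        have e1 : x 1 / ((x 0 + x 1) / 2) = 2 / (1 + x 0 / x 1) := by
          field_simp
          ring
        have e2 : x 1 / x 0 = (x 0 / x 1)⁻¹ := by rw [inv_div]
        rw [e1, e2]
        exact hkey
      · rw [max_eq_left hcase, min_eq_right hcase] at hball ⊢
        have hball' : x 0 / x 1 ≤ Real.exp C :=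
          (Real.log_le_iff_le_exp (div_pos ha hb)).1 hball
        have hkey := keyA hC ((one_le_div hb).2 hcase) hball'
        rw [max_eq_right (by linarith : x 1 ≤ (x 0 + x 1) / 2),
          min_eq_left (by linarith : x 1 ≤ (x 0 + x 1) / 2)]
        have e1 : (x 0 + x 1) / 2 / x 1 = (1 + x 0 / x 1) / 2 := by
          field_simp
          ring
        rw [e1]
        exact hkey
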